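/- Let n ≥ 2, c₀ ≥ 1, and let O ⊂ ℝⁿ be a bounded open convex set. Let ξ and ξ̄ be convex functions, C² on O and continuous on the closure of O, with ξ = ξ̄ on ∂O, det(D²ξ(y)) = g(y) on O where 1/c₀ ≤ g ≤ c₀, and det(D²ξ̄(y)) = 1 on O. Then there is a constant C depending only on n and the diameter of O such that sup_O |ξ − ξ̄| ≤ C ( ∫_O |g(y)^{1/n} − 1|ⁿ dy )^{1/n}. -/

import Mathlib

open Filter Bornology Matrix MeasureTheory
open scoped RealInnerProductSpace
open scoped Topology
open scoped ENNReal NNReal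

noncomputable section

/-- `ℝⁿ` as a Euclidean space. -/
abbrev En (n : ℕ) := EuclideanSpace ℝ (Fin n)

/-- The Hessian matrix `D²u(x)` of `u : ℝⁿ → ℝ` at `x`. -/
def Hess {n : ℕ} (u : En n → ℝ) (x : En n) : Matrix (Fin n) (Fin n) ℝ :=
  Matrix.of fun i j =>
    iteratedFDeriv ℝ 2 u x ![EuclideanSpace.single i 1, EuclideanSpace.single j 1]



lemma geom_superadd {n : ℕ} (hn : n ≠ 0) (μ : Fin n → ℝ) (hμ : ∀ i, 0 ≤ μ i) :
    1 + (∏ i, μ i) ^ ((1:ℝ)/n) ≤ (∏ i, (1 + μ i)) ^ ((1:ℝ)/n) := by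
  have hn' : (0:ℝ) < n := by exact_mod_cast Nat.pos_of_ne_zero hn
  have hpos : ∀ i, (0:ℝ) < 1 + μ i := fun i => by linarith [hμ i]
  set c : Fin n → ℝ := fun i => 1 / (1 + μ i) with hc
  set d : Fin n → ℝ := fun i => μ i / (1 + μ i) with hd
  have hcn : ∀ i, 0 ≤ c i := fun i => by
    exact div_nonneg zero_le_one (hpos i).le
  have hdn : ∀ i, 0 ≤ d i := fun i => div_nonneg (hμ i) (hpos i).le
  have hw : ∀ i ∈ (Finset.univ : Finset (Fin n)), (0:ℝ) ≤ (1:ℝ)/n :=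
    fun _ _ => div_nonneg zero_le_one (Nat.cast_nonneg n)
  have hw' : ∑ _i ∈ (Finset.univ : Finset (Fin n)), (1:ℝ)/n = 1 := by
    rw [Finset.sum_const, Finset.card_univ, Fintype.card_fin, nsmul_eq_mul]
    field_simp
  have h1 := Real.geom_mean_le_arith_mean_weighted Finset.univ (fun _ => (1:ℝ)/n) c hw hw'
    (fun i _ => hcn i)
  have h2 := Real.geom_mean_le_arith_mean_weighted Finset.univ (fun _ => (1:ℝ)/n) d hw hw'
    (fun i _ => hdn i)
  have hsum : ∏ i, c i ^ ((1:ℝ)/n) + ∏ i, d i ^ ((1:ℝ)/n) ≤ 1 := by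
    have he : ∑ i : Fin n, ((1:ℝ)/n * c i) + ∑ i : Fin n, ((1:ℝ)/n * d i) = 1 := by
      rw [← Finset.sum_add_distrib]
      have : ∀ i : Fin n, (1:ℝ)/n * c i + (1:ℝ)/n * d i = (1:ℝ)/n := by
        intro i
        have h := (hpos i).ne'
        rw [← mul_add]; simp only [hc, hd]; rw [← add_div, div_self h, mul_one]
      simp_rw [this]
      exact hw'
    linarith [h1, h2]
  set P := ∏ i, (1 + μ i) with hP
  have hPpos : 0 < P := Finset.prod_pos fun i _ => hpos i
  have key : P ^ ((1:ℝ)/n) * (∏ i, c i ^ ((1:ℝ)/n) + ∏ i, d i ^ ((1:ℝ)/n)) =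
      1 + (∏ i, μ i) ^ ((1:ℝ)/n) := by
    rw [mul_add]
    have e1 : P ^ ((1:ℝ)/n) * ∏ i, c i ^ ((1:ℝ)/n) = 1 := by
      rw [hP, ← Real.finset_prod_rpow _ _ (fun i _ => (hpos i).le) _,
        ← Finset.prod_mul_distrib]
      have : ∀ i ∈ (Finset.univ : Finset (Fin n)),
          (1 + μ i) ^ ((1:ℝ)/n) * c i ^ ((1:ℝ)/n) = 1 := by
        intro i _
        rw [← Real.mul_rpow (hpos i).le (hcn i), hc]
        simp only
        rw [mul_one_div, div_self (hpos i).ne', Real.one_rpow]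
      rw [Finset.prod_congr rfl this, Finset.prod_const_one]
    have e2 : P ^ ((1:ℝ)/n) * ∏ i, d i ^ ((1:ℝ)/n) = (∏ i, μ i) ^ ((1:ℝ)/n) := by
      rw [hP, ← Real.finset_prod_rpow _ _ (fun i _ => (hpos i).le) _,
        ← Finset.prod_mul_distrib]
      have : ∀ i ∈ (Finset.univ : Finset (Fin n)),
          (1 + μ i) ^ ((1:ℝ)/n) * d i ^ ((1:ℝ)/n) = μ i ^ ((1:ℝ)/n) := by
        intro i _
        rw [← Real.mul_rpow (hpos i).le (hdn i), hd]
        simp only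
        rw [mul_div_cancel₀ _ (hpos i).ne']
      rw [Finset.prod_congr rfl this, Real.finset_prod_rpow _ _ (fun i _ => hμ i) _]
    rw [e1, e2]
  calc 1 + (∏ i, μ i) ^ ((1:ℝ)/n)
      = P ^ ((1:ℝ)/n) * (∏ i, c i ^ ((1:ℝ)/n) + ∏ i, d i ^ ((1:ℝ)/n)) := key.symm
    _ ≤ P ^ ((1:ℝ)/n) * 1 := mul_le_mul_of_nonneg_left hsum (Real.rpow_nonneg hPpos.le _)
    _ = P ^ ((1:ℝ)/n) := mul_one _




-- second derivative along a direction at a local min is nonneg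
lemma localmin_second_nonneg {n : ℕ} {w : En n → ℝ} {F : En n → (En n →L[ℝ] ℝ)}
    {f'' : En n →L[ℝ] (En n →L[ℝ] ℝ)} {y₀ : En n}
    (hw : ∀ᶠ y in 𝓝 y₀, HasFDerivAt w (F y) y) (hF : HasFDerivAt F f'' y₀)
    (hmin : IsLocalMin w y₀) (e : En n) : 0 ≤ f'' e e := by
  by_contra hneg
  push_neg at hneg
  set L : ℝ → En n := fun t => y₀ + t • e with hLdef
  have hL0 : L 0 = y₀ := by simp [hLdef]
  have hLd : ∀ t : ℝ, HasDerivAt L e t := by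
    intro t
    rw [← one_smul ℝ e]
    exact ((hasDerivAt_id t).smul_const e).const_add y₀
  have hLcont : Continuous L := by continuity
  have hLt : Tendsto L (𝓝 0) (𝓝 y₀) := by
    rw [← hL0]; exact hLcont.continuousAt
  set φ : ℝ → ℝ := fun t => w (L t) with hφdef
  set φ' : ℝ → ℝ := fun t => F (L t) e with hφ'def
  -- derivative of φ near 0
  have hφd : ∀ᶠ t in 𝓝 (0:ℝ), HasDerivAt φ (φ' t) t := by
    filter_upwards [hLt.eventually hw] with t ht
    exact ht.comp_hasDerivAt t (hLd t)
  -- F y₀ = 0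
  have hF0 : F y₀ = 0 := hmin.hasFDerivAt_eq_zero hw.self_of_nhds
  have hφ'0 : φ' 0 = 0 := by simp [hφ'def, hL0, hF0]
  -- second derivative of φ at 0
  have hφ'' : HasDerivAt φ' (f'' e e) 0 := by
    have h1 : HasDerivAt (fun t => F (L t)) (f'' e) 0 := by
      have hF' : HasFDerivAt F f'' (L 0) := hL0.symm ▸ hF
      exact hF'.comp_hasDerivAt 0 (hLd 0)
    have h2 := (ContinuousLinearMap.apply ℝ ℝ e).hasFDerivAt.comp_hasDerivAt 0 h1
    exact h2
  -- slope of φ' tends to f'' e e < 0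
  have hslope : Tendsto (fun t => φ' t / t) (𝓝[≠] (0:ℝ)) (𝓝 (f'' e e)) := by
    have := hasDerivAt_iff_tendsto_slope.1 hφ''
    refine this.congr' ?_
    filter_upwards [self_mem_nhdsWithin] with t ht
    simp [slope_def_field, hφ'0, div_eq_inv_mul]
  have hev : ∀ᶠ t in 𝓝[>] (0:ℝ), φ' t / t < 0 := by
    have h1 : ∀ᶠ t in 𝓝[≠] (0:ℝ), φ' t / t < 0 :=
      hslope.eventually (Filter.Tendsto.eventually_lt_const hneg tendsto_id)
    exact nhdsWithin_mono 0 (fun t (ht : t ∈ Set.Ioi 0) => ne_of_gt ht) h1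
  have hev' : ∀ᶠ t in 𝓝[>] (0:ℝ), φ' t < 0 := by
    filter_upwards [hev, self_mem_nhdsWithin] with t h1 (h2 : 0 < t)
    exact (div_neg_iff.1 h1).elim (fun h => absurd h2 (not_lt.2 h.2.le)) fun h => h.1
  -- local min of φ at 0
  have hφmin : ∀ᶠ t in 𝓝 (0:ℝ), φ 0 ≤ φ t := by
    have := hLt.eventually hmin
    filter_upwards [this] with t ht
    simpa [hφdef, hL0] using ht
  -- extract δ
  rw [eventually_nhdsWithin_iff] at hev'
  obtain ⟨δ, hδpos, hδ⟩ := Metric.eventually_nhds_iff.1 (hev'.and (hφd.and hφmin))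
  -- φ strictly decreasing on [0, δ/2]
  have hanti : StrictAntiOn φ (Set.Icc 0 (δ/2)) := by
    apply strictAntiOn_of_deriv_neg (convex_Icc _ _)
    · intro t ht
      rcases ht with ⟨h1, h2⟩
      have : dist t 0 < δ := by
        rw [Real.dist_eq, sub_zero, abs_of_nonneg h1]; linarith
      exact ((hδ this).2.1).continuousAt.continuousWithinAt
    · intro t ht
      rw [interior_Icc] at ht
      rcases ht with ⟨h1, h2⟩
      have hd : dist t 0 < δ := by
        rw [Real.dist_eq, sub_zero, abs_of_pos h1]; linarith
      have := hδ hd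
      rw [(this.2.1).deriv]
      exact this.1 h1
  have h1 : φ (δ/2) < φ 0 := by
    apply hanti (Set.left_mem_Icc.2 (by linarith)) (Set.right_mem_Icc.2 (by linarith))
    linarith
  have h2 : φ 0 ≤ φ (δ/2) := by
    have hd : dist (δ/2) 0 < δ := by
      rw [Real.dist_eq, sub_zero, abs_of_pos (by linarith)]; linarith
    exact (hδ hd).2.2
  linarith

-- second derivative along a direction of a convex function is nonneg
lemma convex_second_nonneg {n : ℕ} {O : Set (En n)} (hO : IsOpen O) {w : En n → ℝ}
    {F : En n → (En n →L[ℝ] ℝ)} {f'' : En n →L[ℝ] (En n →L[ℝ] ℝ)} {y₀ : En n}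
    (hconv : ConvexOn ℝ (closure O) w)
    (hw : ∀ y ∈ O, HasFDerivAt w (F y) y) (hF : HasFDerivAt F f'' y₀)
    (hy₀ : y₀ ∈ O) (e : En n) : 0 ≤ f'' e e := by
  set L : ℝ → En n := fun t => y₀ + t • e with hLdef
  have hL0 : L 0 = y₀ := by simp [hLdef]
  have hLd : ∀ t : ℝ, HasDerivAt L e t := by
    intro t
    rw [← one_smul ℝ e]
    exact ((hasDerivAt_id t).smul_const e).const_add y₀
  have hLcont : Continuous L := by continuity
  have hLt : Tendsto L (𝓝 0) (𝓝 y₀) := by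
    rw [← hL0]; exact hLcont.continuousAt
  obtain ⟨δ, hδpos, hδ⟩ := Metric.eventually_nhds_iff.1 (hLt.eventually (hO.eventually_mem hy₀))
  set S : Set ℝ := Set.Ioo (-δ) δ with hSdef
  have hLS : ∀ t ∈ S, L t ∈ O := by
    intro t ht
    apply hδ
    rw [Real.dist_eq, sub_zero]
    rcases ht with ⟨h1, h2⟩
    rw [abs_lt]; exact ⟨h1, h2⟩
  set φ : ℝ → ℝ := fun t => w (L t) with hφdef
  set φ' : ℝ → ℝ := fun t => F (L t) e with hφ'def
  have hφd : ∀ t ∈ S, HasDerivAt φ (φ' t) t := fun t ht =>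
    (hw _ (hLS t ht)).comp_hasDerivAt t (hLd t)
  -- φ is convex on S
  have hφconv : ConvexOn ℝ S φ := by
    have hsub : ∀ t ∈ S, L t ∈ closure O := fun t ht => subset_closure (hLS t ht)
    constructor
    · exact convex_Ioo _ _
    · intro a ha b hb p q hp hq hpq
      have hL : L (p * a + q * b) = p • L a + q • L b := by
        have h2 : p • L a + q • L b = (p + q) • y₀ + (p * a + q * b) • e := by
          simp only [hLdef]; module
        rw [h2, hpq, one_smul]
      show w (L (p • a + q • b)) ≤ p • w (L a) + q • w (L b)
      simp only [smul_eq_mul]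
      rw [hL]
      exact hconv.2 (hsub a ha) (hsub b hb) hp hq hpq
  -- deriv φ monotone on S
  have hmono : MonotoneOn (deriv φ) S := by
    apply ConvexOn.monotoneOn_deriv hφconv
    exact fun t ht => (hφd t ht).differentiableAt
  have hderiv_eq : ∀ t ∈ S, deriv φ t = φ' t := fun t ht => (hφd t ht).deriv
  -- second derivative of φ' at 0
  have h0S : (0:ℝ) ∈ S := by constructor <;> simp [hδpos] <;> linarith
  have hφ'' : HasDerivAt φ' (f'' e e) 0 := by
    have h1 : HasDerivAt (fun t => F (L t)) (f'' e) 0 := by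
      have hF' : HasFDerivAt F f'' (L 0) := hL0.symm ▸ hF
      exact hF'.comp_hasDerivAt 0 (hLd 0)
    have h2 := (ContinuousLinearMap.apply ℝ ℝ e).hasFDerivAt.comp_hasDerivAt 0 h1
    exact h2
  have hslope : Tendsto (fun t => (φ' t - φ' 0) / t) (𝓝[≠] (0:ℝ)) (𝓝 (f'' e e)) := by
    have := hasDerivAt_iff_tendsto_slope.1 hφ''
    refine this.congr' ?_
    filter_upwards [self_mem_nhdsWithin] with t ht
    simp [slope_def_field, div_eq_inv_mul]
  have hslope' : Tendsto (fun t => (φ' t - φ' 0) / t) (𝓝[>] (0:ℝ)) (𝓝 (f'' e e)) :=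
    hslope.mono_left (nhdsWithin_mono 0 (fun t (ht : t ∈ Set.Ioi 0) => ne_of_gt ht))
  refine ge_of_tendsto hslope' ?_
  have : Set.Ioo (0:ℝ) δ ∈ 𝓝[>] (0:ℝ) := Ioo_mem_nhdsGT_of_mem (by constructor <;> simp [hδpos])
  filter_upwards [this] with t ⟨ht0, htδ⟩
  have htS : t ∈ S := ⟨by linarith, htδ⟩
  have h1 : φ' 0 ≤ φ' t := by
    rw [← hderiv_eq 0 h0S, ← hderiv_eq t htS]
    exact hmono h0S htS ht0.le
  exact div_nonneg (by linarith) ht0.le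






def E' {n : ℕ} (i : Fin n) : En n := EuclideanSpace.single i 1

def bmat {n : ℕ} (f'' : En n →L[ℝ] (En n →L[ℝ] ℝ)) : Matrix (Fin n) (Fin n) ℝ :=
  Matrix.of fun i j => f'' (E' i) (E' j)

lemma Hess_eq_bmat {n : ℕ} (u : En n → ℝ) (x : En n) :
    Hess u x = bmat (fderiv ℝ (fderiv ℝ u) x) := by
  ext i j
  simp only [Hess, bmat, Matrix.of_apply, E']
  rw [iteratedFDeriv_two_apply]
  simp

lemma psd_bmat {n : ℕ} (f'' : En n →L[ℝ] (En n →L[ℝ] ℝ))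
    (hsymm : ∀ a b, f'' a b = f'' b a) (hnn : ∀ e, 0 ≤ f'' e e) :
    (bmat f'').PosSemidef := by
  rw [Matrix.posSemidef_iff_dotProduct_mulVec]
  constructor
  · ext i j
    simp only [conjTranspose_apply, bmat, Matrix.of_apply, star_trivial]
    exact hsymm _ _
  · intro x
    set vx : En n := ∑ i, x i • E' i with hvx
    have expand : f'' vx vx = ∑ i, ∑ j, x i * x j * f'' (E' i) (E' j) := by
      rw [hvx]
      simp only [map_sum, ContinuousLinearMap.sum_apply, _root_.map_smul,
        ContinuousLinearMap.smul_apply, ContinuousLinearMap.coe_smul', Pi.smul_apply,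
        smul_eq_mul, Finset.mul_sum]
      first
      | (rw [Finset.sum_comm];
         exact Finset.sum_congr rfl fun i _ => Finset.sum_congr rfl fun j _ => by ring)
      | exact Finset.sum_congr rfl fun i _ => Finset.sum_congr rfl fun j _ => by ring
    have key : star x ⬝ᵥ (bmat f'') *ᵥ x = f'' vx vx := by
      rw [expand]
      simp only [dotProduct, mulVec, bmat, Matrix.of_apply, star_trivial]
      congr 1
      ext i
      rw [Finset.mul_sum]
      congr 1
      ext j
      ring
    rw [key]
    exact hnn _






/-- coordinate realization of a linear functional -/
def Avec {n : ℕ} : (En n →L[ℝ] ℝ) →L[ℝ] En n :=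
  ((EuclideanSpace.equiv (Fin n) ℝ).symm : (Fin n → ℝ) →L[ℝ] En n).comp
    (ContinuousLinearMap.pi (fun i => ContinuousLinearMap.apply ℝ ℝ (E' i)))

lemma Avec_apply {n : ℕ} (T : En n →L[ℝ] ℝ) (i : Fin n) : (Avec T) i = T (E' i) := rfl

def jmap {n : ℕ} (f'' : En n →L[ℝ] (En n →L[ℝ] ℝ)) : En n →L[ℝ] En n := Avec.comp f''

lemma det_jmap {n : ℕ} (f'' : En n →L[ℝ] (En n →L[ℝ] ℝ)) :
    (jmap f'').det = (bmat f'').det := by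
  have b := (EuclideanSpace.basisFun (Fin n) ℝ).toBasis
  rw [ContinuousLinearMap.det, ← LinearMap.det_toMatrix (EuclideanSpace.basisFun (Fin n) ℝ).toBasis]
  have hmat : LinearMap.toMatrix (EuclideanSpace.basisFun (Fin n) ℝ).toBasis
      (EuclideanSpace.basisFun (Fin n) ℝ).toBasis (jmap f'').toLinearMap = (bmat f'')ᵀ := by
    ext i j
    rw [LinearMap.toMatrix_apply]
    simp only [OrthonormalBasis.coe_toBasis, EuclideanSpace.basisFun_apply,
      OrthonormalBasis.coe_toBasis_repr_apply, EuclideanSpace.basisFun_repr,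
      ContinuousLinearMap.coe_coe]
    show (jmap f'' (EuclideanSpace.single j 1)) i = (bmat f'')ᵀ i j
    rw [jmap, ContinuousLinearMap.comp_apply]
    rw [show (EuclideanSpace.single j (1:ℝ)) = E' j from rfl, Avec_apply]
    rfl
  rw [hmat, Matrix.det_transpose]

lemma psd_det_nonneg {n : ℕ} {A : Matrix (Fin n) (Fin n) ℝ} (hA : A.PosSemidef) : 0 ≤ A.det := by
  rw [hA.1.det_eq_prod_eigenvalues]
  apply Finset.prod_nonneg
  intro i _
  exact_mod_cast hA.eigenvalues_nonneg i

lemma isClosed_psd {n : ℕ} : IsClosed {A : Matrix (Fin n) (Fin n) ℝ | A.PosSemidef} := by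
  have : {A : Matrix (Fin n) (Fin n) ℝ | A.PosSemidef} =
      (⋂ i, ⋂ j, {A : Matrix (Fin n) (Fin n) ℝ | A j i = A i j}) ∩
      ⋂ x : Fin n → ℝ, {A : Matrix (Fin n) (Fin n) ℝ | 0 ≤ star x ⬝ᵥ A *ᵥ x} := by
    ext A
    simp only [Set.mem_setOf_eq, Set.mem_inter_iff, Set.mem_iInter, Matrix.posSemidef_iff_dotProduct_mulVec]
    constructor
    · intro h
      refine ⟨fun i j => ?_, fun x => h.2 x⟩
      have := congrFun (congrFun h.1 i) j
      simpa [conjTranspose_apply] using this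
    · intro ⟨h1, h2⟩
      refine ⟨?_, h2⟩
      ext i j
      simpa [conjTranspose_apply] using h1 i j
  rw [this]
  have hentry : ∀ i j : Fin n, Continuous fun A : Matrix (Fin n) (Fin n) ℝ => A i j :=
    fun i j => (continuous_apply j).comp (continuous_apply i)
  apply IsClosed.inter
  · exact isClosed_iInter fun i => isClosed_iInter fun j =>
      isClosed_eq (hentry j i) (hentry i j)
  · apply isClosed_iInter
    intro x
    apply isClosed_le continuous_const
    show Continuous fun A : Matrix (Fin n) (Fin n) ℝ => ∑ i, star (x i) * ∑ j, A i j * x j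
    apply continuous_finset_sum
    intro i _
    apply Continuous.mul continuous_const
    apply continuous_finset_sum
    intro j _
    exact ((hentry i j).mul continuous_const)
lemma abp {n : ℕ} (hn : 1 ≤ n) {r : ℝ} (hr : 0 < r) {O : Set (En n)} (hO : IsOpen O)
    (hOb : IsBounded O) (hdiam : Metric.diam O ≤ r) {v : En n → ℝ}
    (hv : ContDiffOn ℝ 2 v O) (hvc : ContinuousOn v (closure O))
    (hv0 : ∀ z ∈ frontier O, v z = 0) (k : En n → ℝ)
    (hdet : ∀ y ∈ O, (bmat (fderiv ℝ (fderiv ℝ v) y)).PosSemidef →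
      (bmat (fderiv ℝ (fderiv ℝ v) y)).det ≤ k y)
    {x : En n} (hx : x ∈ O) (hvx : v x < 0) :
    ENNReal.ofReal ((-v x / r) ^ n) * volume (Metric.ball (0 : En n) 1) ≤
      ∫⁻ y in O, ENNReal.ofReal (k y) := by
  haveI : Nontrivial (En n) := by
    refine ⟨E' ⟨0, by omega⟩, 0, fun h => ?_⟩
    have := congrFun (congrArg (fun z : En n => (z : Fin n → ℝ)) h) ⟨0, by omega⟩
    simp [E', EuclideanSpace.single_apply] at this
  set M := -v x with hMdef
  have hMpos : 0 < M := by simp [hMdef]; linarith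
  set F1 := fderiv ℝ v with hF1def
  set F2 := fderiv ℝ F1 with hF2def
  have hvdiff : ∀ y ∈ O, HasFDerivAt v (F1 y) y := by
    intro y hy
    exact ((hv.contDiffAt (hO.mem_nhds hy)).differentiableAt (by norm_num)).hasFDerivAt
  have h2diff : ∀ y ∈ O, HasFDerivAt F1 (F2 y) y := by
    intro y hy
    have h1 : ContDiffAt ℝ 1 F1 y :=
      (hv.contDiffAt (hO.mem_nhds hy)).fderiv_right (le_refl 2)
    exact (h1.differentiableAt (by norm_num)).hasFDerivAt
  set Γ : Set (En n) := O ∩ (fun y => bmat (F2 y)) ⁻¹' {A | A.PosSemidef} with hΓdef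
  set G : En n → En n := fun y => Avec (F1 y) with hGdef
  have hcov : Metric.ball (0 : En n) (M / r) ⊆ G '' Γ := by
    rintro p hp
    have hpn : ‖p‖ < M / r := by simpa [Metric.mem_ball, dist_zero_right] using hp
    set w : En n → ℝ := fun y => v y - ⟪p, y - x⟫ with hwdef
    have hwc : ContinuousOn w (closure O) := by
      apply hvc.sub
      exact (continuous_const.inner (continuous_id.sub continuous_const)).continuousOn
    have hcc : IsCompact (closure O) := hOb.isCompact_closure
    obtain ⟨y₀, hy₀c, hy₀min⟩ := hcc.exists_isMinOn ⟨x, subset_closure hx⟩ hwc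
    have hy₀x : w y₀ ≤ w x := hy₀min (subset_closure hx)
    have hwx : w x = v x := by simp [hwdef]
    have hy₀O : y₀ ∈ O := by
      by_contra hnot
      have hfr : y₀ ∈ frontier O := by
        rw [hO.frontier_eq]
        exact ⟨hy₀c, hnot⟩
      have h1 : w y₀ = -⟪p, y₀ - x⟫ := by simp [hwdef, hv0 y₀ hfr]
      have h2 : |⟪p, y₀ - x⟫| ≤ ‖p‖ * ‖y₀ - x‖ := abs_real_inner_le_norm p _
      have h3 : ‖y₀ - x‖ ≤ r := by
        rw [← dist_eq_norm]
        calc dist y₀ x ≤ Metric.diam (closure O) :=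
              Metric.dist_le_diam_of_mem hOb.closure hy₀c (subset_closure hx)
          _ = Metric.diam O := by rw [Metric.diam_closure]
          _ ≤ r := hdiam
      have h4 : ‖p‖ * ‖y₀ - x‖ < M := by
        calc ‖p‖ * ‖y₀ - x‖ ≤ ‖p‖ * r := by
              exact mul_le_mul_of_nonneg_left h3 (norm_nonneg p)
          _ < (M / r) * r := by exact mul_lt_mul_of_pos_right hpn hr
          _ = M := div_mul_cancel₀ M hr.ne'
      have h5 : -⟪p, y₀ - x⟫ ≥ -(‖p‖ * ‖y₀ - x‖) := by
        have := neg_abs_le ⟪p, y₀ - x⟫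
        have h6 := (abs_le.1 h2).1
        linarith [le_abs_self ⟪p, y₀ - x⟫]
      linarith [hy₀x, hwx, h1, h4, h5]
    have hloc : IsLocalMin w y₀ :=
      hy₀min.isLocalMin (mem_nhds_iff.2 ⟨O, subset_closure, hO, hy₀O⟩)
    set Fw : En n → (En n →L[ℝ] ℝ) := fun y => F1 y - innerSL ℝ p with hFwdef
    have hwd : ∀ y ∈ O, HasFDerivAt w (Fw y) y := by
      intro y hy
      have h2 : HasFDerivAt (fun z : En n => ⟪p, z - x⟫) (innerSL ℝ p) y := by
        have hbase : HasFDerivAt (fun z : En n => ⟪p, z⟫) (innerSL ℝ p) y :=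
          (innerSL ℝ p).hasFDerivAt
        have := hbase.sub_const ⟪p, x⟫
        apply this.congr_of_eventuallyEq
        filter_upwards with z
        rw [inner_sub_right]
      exact (hvdiff y hy).sub h2
    have hFwd : HasFDerivAt Fw (F2 y₀) y₀ := (h2diff y₀ hy₀O).sub_const _
    have hev : ∀ᶠ y in 𝓝 y₀, HasFDerivAt w (Fw y) y := by
      filter_upwards [hO.eventually_mem hy₀O] with y hy
      exact hwd y hy
    have hnn : ∀ e, 0 ≤ F2 y₀ e e := fun e => localmin_second_nonneg hev hFwd hloc e
    have hsymm : ∀ a b, F2 y₀ a b = F2 y₀ b a := by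
      have hev2 : ∀ᶠ y in 𝓝 y₀, HasFDerivAt v (F1 y) y := by
        filter_upwards [hO.eventually_mem hy₀O] with y hy
        exact hvdiff y hy
      exact second_derivative_symmetric_of_eventually hev2 (h2diff y₀ hy₀O)
    have hpsd := psd_bmat _ hsymm hnn
    refine ⟨y₀, ⟨hy₀O, hpsd⟩, ?_⟩
    have hF10 : Fw y₀ = 0 := hloc.hasFDerivAt_eq_zero (hwd y₀ hy₀O)
    have hF1p : F1 y₀ = innerSL ℝ p := by
      rw [hFwdef] at hF10
      simpa [sub_eq_zero] using hF10
    have : G y₀ = p := by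
      apply PiLp.ext
      intro i
      rw [hGdef]
      simp only
      rw [Avec_apply, hF1p]
      simp only [innerSL_apply_apply, E']
      rw [EuclideanSpace.inner_single_right]
      simp
    rw [this]
  have hmeas : MeasurableSet Γ := by
    have h1 : Measurable (fun y => (fun i j => F2 y (E' i) (E' j) : Fin n → Fin n → ℝ)) := by
      apply measurable_pi_lambda
      intro i
      apply measurable_pi_lambda
      intro j
      have hcont : Continuous fun T : En n →L[ℝ] (En n →L[ℝ] ℝ) => T (E' i) (E' j) :=
        (ContinuousLinearMap.apply ℝ ℝ (E' j)).continuous.comp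
          (ContinuousLinearMap.apply ℝ (En n →L[ℝ] ℝ) (E' i)).continuous
      exact hcont.measurable.comp (measurable_fderiv ℝ F1)
    have h2 : IsClosed {A : Fin n → Fin n → ℝ | (Matrix.of A).PosSemidef} :=
      isClosed_psd.preimage (by exact continuous_id :
        Continuous (fun A : Fin n → Fin n → ℝ => Matrix.of A))
    have hΓeq : Γ = O ∩ (fun y => (fun i j => F2 y (E' i) (E' j) : Fin n → Fin n → ℝ)) ⁻¹'
        {A : Fin n → Fin n → ℝ | (Matrix.of A).PosSemidef} := rfl
    rw [hΓeq]
    exact hO.measurableSet.inter (h2.measurableSet.preimage h1)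
  have hjac : volume (G '' Γ) ≤ ∫⁻ y in Γ, ENNReal.ofReal |(jmap (F2 y)).det| := by
    apply addHaar_image_le_lintegral_abs_det_fderiv volume hmeas
    intro y hy
    have : HasFDerivAt G (jmap (F2 y)) y :=
      (Avec.hasFDerivAt).comp y (h2diff y hy.1)
    exact this.hasFDerivWithinAt
  calc ENNReal.ofReal ((M / r) ^ n) * volume (Metric.ball (0 : En n) 1)
      = volume (Metric.ball (0 : En n) (M / r)) := by
        rw [Measure.addHaar_ball (μ := (volume : Measure (En n))) 0 (div_nonneg hMpos.le hr.le), finrank_euclideanSpace_fin]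
    _ ≤ volume (G '' Γ) := measure_mono hcov
    _ ≤ ∫⁻ y in Γ, ENNReal.ofReal |(jmap (F2 y)).det| := hjac
    _ ≤ ∫⁻ y in Γ, ENNReal.ofReal (k y) := by
        apply lintegral_mono_ae
        rw [ae_restrict_iff' hmeas]
        apply ae_of_all
        intro y hy
        apply ENNReal.ofReal_le_ofReal
        rw [det_jmap, abs_of_nonneg (psd_det_nonneg hy.2)]
        exact hdet y hy.1 hy.2
    _ ≤ ∫⁻ y in O, ENNReal.ofReal (k y) := lintegral_mono_set fun y hy => hy.1
lemma det_one_add_psd {n : ℕ} (hn : n ≠ 0) {D : Matrix (Fin n) (Fin n) ℝ} (hD : D.PosSemidef) :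
    1 + D.det ^ ((1:ℝ)/n) ≤ (1 + D).det ^ ((1:ℝ)/n) := by
  have hH := hD.1
  set μ : Fin n → ℝ := hH.eigenvalues with hμdef
  have hμnn : ∀ i, 0 ≤ μ i := fun i => hD.eigenvalues_nonneg i
  have hdet : D.det = ∏ i, μ i := by
    rw [hH.det_eq_prod_eigenvalues]
    norm_num
    rfl
  set U : Matrix (Fin n) (Fin n) ℝ := (Matrix.IsHermitian.eigenvectorUnitary hH : Matrix (Fin n) (Fin n) ℝ) with hUdef
  have hsp : D = U * Matrix.diagonal μ * star U := by
    have := hH.spectral_theorem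
    convert this using 2
    try norm_num
    rfl
  have hUU : U * star U = 1 := by
    have := (Matrix.IsHermitian.eigenvectorUnitary hH).2
    rw [Matrix.mem_unitaryGroup_iff] at this
    exact this
  have hdet1 : (1 + D).det = ∏ i, (1 + μ i) := by
    have h1 : (1 : Matrix (Fin n) (Fin n) ℝ) + D = U * Matrix.diagonal (fun i => 1 + μ i) * star U := by
      have hdiag : Matrix.diagonal (fun i => (1:ℝ) + μ i) = 1 + Matrix.diagonal μ := by
        rw [← Matrix.diagonal_one, Matrix.diagonal_add]
      rw [hdiag, Matrix.mul_add, Matrix.add_mul, Matrix.mul_one, ← hsp, hUU]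
    rw [h1, Matrix.det_mul, Matrix.det_mul, Matrix.det_diagonal]
    have : U.det * (star U).det = 1 := by
      rw [← Matrix.det_mul, hUU, Matrix.det_one]
    ring_nf
    ring_nf at this
    calc U.det * (∏ i, (1 + μ i)) * (star U).det
        = (∏ i, (1 + μ i)) * (U.det * (star U).det) := by ring
      _ = ∏ i, (1 + μ i) := by rw [this]; ring
  rw [hdet, hdet1]
  exact geom_superadd hn μ hμnn

lemma minkowski_det {n : ℕ} (hn : n ≠ 0) {B C : Matrix (Fin n) (Fin n) ℝ}
    (hB : B.PosSemidef) (hBdet : 0 < B.det) (hC : C.PosSemidef) :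
    B.det ^ ((1:ℝ)/n) + C.det ^ ((1:ℝ)/n) ≤ (B + C).det ^ ((1:ℝ)/n) := by
  open scoped MatrixOrder in set R : Matrix (Fin n) (Fin n) ℝ := CFC.sqrt B with hRdef
  open scoped MatrixOrder in have hR : R.PosSemidef := (CFC.sqrt_nonneg B).posSemidef
  open scoped MatrixOrder in have hRR : R * R = B := CFC.sqrt_mul_sqrt_self B hB.nonneg
  have hRdet2 : R.det * R.det = B.det := by rw [← Matrix.det_mul, hRR]
  have hRdetpos : 0 < R.det := by
    rcases lt_or_eq_of_le (psd_det_nonneg hR) with h | h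
    · exact h
    · exfalso; rw [← h] at hRdet2; simp at hRdet2; linarith
  have hRunit : IsUnit R.det := hRdetpos.ne'.isUnit
  set S : Matrix (Fin n) (Fin n) ℝ := R⁻¹ with hSdef
  have hSH : S.IsHermitian := hR.1.inv
  have hRS : R * S = 1 := Matrix.mul_nonsing_inv R hRunit
  have hSR : S * R = 1 := Matrix.nonsing_inv_mul R hRunit
  set D : Matrix (Fin n) (Fin n) ℝ := S * C * S with hDdef
  have hD : D.PosSemidef := by
    have := hC.mul_mul_conjTranspose_same S
    rwa [hSH.eq] at this
  have hSdet : S.det = R.det⁻¹ := by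
    rw [hSdef, Matrix.det_nonsing_inv, Ring.inverse_eq_inv']
  have hDdet : D.det = C.det / B.det := by
    rw [hDdef, Matrix.det_mul, Matrix.det_mul, hSdet, ← hRdet2]
    field_simp
    try ring
  have hkey : B + C = R * (1 + D) * R := by
    rw [Matrix.mul_add, Matrix.add_mul, Matrix.mul_one, hRR]
    congr 1
    have h1 : R * D * R = (R * S) * (C * (S * R)) := by
      rw [hDdef]; simp only [Matrix.mul_assoc]
    rw [h1, hRS, hSR, one_mul, mul_one]
  have hBCdet : (B + C).det = B.det * (1 + D).det := by
    rw [hkey, Matrix.det_mul, Matrix.det_mul, ← hRdet2]; ring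
  have h := det_one_add_psd hn hD
  rw [hDdet] at h
  have hBpow : 0 < B.det ^ ((1:ℝ)/n) := Real.rpow_pos_of_pos hBdet _
  have hmul := mul_le_mul_of_nonneg_left h hBpow.le
  calc B.det ^ ((1:ℝ)/n) + C.det ^ ((1:ℝ)/n)
      = B.det ^ ((1:ℝ)/n) * (1 + (C.det / B.det) ^ ((1:ℝ)/n)) := by
        rw [mul_add, mul_one, Real.div_rpow (psd_det_nonneg hC) hBdet.le]
        rw [mul_div_cancel₀ _ hBpow.ne']
    _ ≤ B.det ^ ((1:ℝ)/n) * ((1 + D).det ^ ((1:ℝ)/n)) := hmul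
    _ = (B + C).det ^ ((1:ℝ)/n) := by
        rw [hBCdet, Real.mul_rpow hBdet.le]
        have h1D : 0 ≤ (1 + D).det := by
          apply psd_det_nonneg
          have := Matrix.PosSemidef.add (Matrix.PosSemidef.one) hD
          exact this
        exact h1D
lemma bmat_sub {n : ℕ} (T1 T2 : En n →L[ℝ] (En n →L[ℝ] ℝ)) :
    bmat (T1 - T2) = bmat T1 - bmat T2 := by
  ext i j
  simp [bmat]

lemma hess_sub_eq {n : ℕ} {O : Set (En n)} (hO : IsOpen O) {f h : En n → ℝ}
    (hf : ContDiffOn ℝ 2 f O) (hh : ContDiffOn ℝ 2 h O) {y : En n} (hy : y ∈ O) :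
    bmat (fderiv ℝ (fderiv ℝ (f - h)) y) =
      bmat (fderiv ℝ (fderiv ℝ f) y) - bmat (fderiv ℝ (fderiv ℝ h) y) := by
  have hfd : ∀ z ∈ O, DifferentiableAt ℝ f z := fun z hz =>
    (hf.contDiffAt (hO.mem_nhds hz)).differentiableAt (by norm_num)
  have hhd : ∀ z ∈ O, DifferentiableAt ℝ h z := fun z hz =>
    (hh.contDiffAt (hO.mem_nhds hz)).differentiableAt (by norm_num)
  have hev : (fderiv ℝ (f - h)) =ᶠ[𝓝 y] (fun z => fderiv ℝ f z - fderiv ℝ h z) := by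
    filter_upwards [hO.eventually_mem hy] with z hz
    exact fderiv_sub (hfd z hz) (hhd z hz)
  have h1 : fderiv ℝ (fderiv ℝ (f - h)) y =
      fderiv ℝ (fun z => fderiv ℝ f z - fderiv ℝ h z) y := hev.fderiv_eq
  have hf1 : DifferentiableAt ℝ (fderiv ℝ f) y :=
    (((hf.contDiffAt (hO.mem_nhds hy)).fderiv_right (m := 1) (le_refl 2)).differentiableAt (by norm_num))
  have hh1 : DifferentiableAt ℝ (fderiv ℝ h) y :=
    (((hh.contDiffAt (hO.mem_nhds hy)).fderiv_right (m := 1) (le_refl 2)).differentiableAt (by norm_num))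
  rw [h1, fderiv_fun_sub hf1 hh1, bmat_sub]

lemma hess_psd_of_convex {n : ℕ} {O : Set (En n)} (hO : IsOpen O) {f : En n → ℝ}
    (hconv : ConvexOn ℝ (closure O) f) (hf : ContDiffOn ℝ 2 f O) {y : En n} (hy : y ∈ O) :
    (bmat (fderiv ℝ (fderiv ℝ f) y)).PosSemidef := by
  have hfd : ∀ z ∈ O, HasFDerivAt f (fderiv ℝ f z) z := fun z hz =>
    ((hf.contDiffAt (hO.mem_nhds hz)).differentiableAt (by norm_num)).hasFDerivAt
  have hf1 : HasFDerivAt (fderiv ℝ f) (fderiv ℝ (fderiv ℝ f) y) y :=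
    ((((hf.contDiffAt (hO.mem_nhds hy)).fderiv_right (m := 1) (le_refl 2)).differentiableAt
      (by norm_num))).hasFDerivAt
  apply psd_bmat
  · have hev : ∀ᶠ z in 𝓝 y, HasFDerivAt f (fderiv ℝ f z) z := by
      filter_upwards [hO.eventually_mem hy] with z hz
      exact hfd z hz
    exact second_derivative_symmetric_of_eventually hev hf1
  · exact fun e => convex_second_nonneg hO hconv hfd hf1 hy e

lemma continuous_det_pi {n : ℕ} : Continuous fun A : Fin n → Fin n → ℝ => (Matrix.of A).det := by
  simp only [Matrix.det_apply]
  apply continuous_finset_sum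
  intro σ _
  apply Continuous.const_smul
  apply continuous_finset_prod
  intro i _
  exact (continuous_apply i).comp (continuous_apply (σ i))
set_option maxHeartbeats 2000000 in
/-- The Alexandrov-estimate comparison used in the proof of Theorem 1.2: the constant depends
only on `n` and (an upper bound `r` for) the diameter of `O`. -/
theorem alexandrov_comparison
    (n : ℕ) (hn : 2 ≤ n) (c₀ : ℝ) (hc₀ : 1 ≤ c₀) (r : ℝ) (hr : 0 < r) :
    ∃ C > (0 : ℝ), ∀ (O : Set (En n)) (ξ ξb g : En n → ℝ),
      IsOpen O → Bornology.IsBounded O → Convex ℝ O → Metric.diam O ≤ r →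
      ConvexOn ℝ (closure O) ξ → ContDiffOn ℝ 2 ξ O → ContinuousOn ξ (closure O) →
      ConvexOn ℝ (closure O) ξb → ContDiffOn ℝ 2 ξb O → ContinuousOn ξb (closure O) →
      (∀ x ∈ frontier O, ξ x = ξb x) →
      (∀ y ∈ O, (Hess ξ y).det = g y) →
      (∀ y ∈ O, 1 / c₀ ≤ g y ∧ g y ≤ c₀) →
      (∀ y ∈ O, (Hess ξb y).det = 1) →
      ∀ x ∈ O, |ξ x - ξb x| ≤
        C * (∫ y in O, |g y ^ ((1 : ℝ) / n) - 1| ^ (n : ℕ)) ^ ((1 : ℝ) / n) := by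
  haveI : Nontrivial (En n) := by
    refine ⟨E' ⟨0, by omega⟩, 0, fun h => ?_⟩
    have := congrFun (congrArg (fun z : En n => (z : Fin n → ℝ)) h) ⟨0, by omega⟩
    simp [E', EuclideanSpace.single_apply] at this
  set ω : ℝ := (volume (Metric.ball (0 : En n) 1)).toReal with hωdef
  have hωpos : 0 < ω :=
    ENNReal.toReal_pos (Metric.measure_ball_pos volume 0 one_pos).ne' measure_ball_lt_top.ne
  refine ⟨r * (ω⁻¹) ^ ((1:ℝ)/n), by positivity, ?_⟩
  intro O ξ ξb g hO hOb hconvO hdiam hξconv hξC2 hξcont hξbconv hξbC2 hξbcont hbd hdetξ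
    hgb hdetξb x hx
  have hn0 : n ≠ 0 := by omega
  set k : En n → ℝ := fun y => |g y ^ ((1 : ℝ) / n) - 1| ^ (n : ℕ) with hkdef
  set I : ℝ≥0∞ := ∫⁻ y in O, ENNReal.ofReal (k y) with hIdef
  set km : En n → ℝ := fun y =>
    |(bmat (fderiv ℝ (fderiv ℝ ξ) y)).det ^ ((1:ℝ)/n) - 1| ^ (n:ℕ) with hkmdef
  have hkm_meas : Measurable km := by
    have h1 : Measurable (fun y =>
        (fun i j => fderiv ℝ (fderiv ℝ ξ) y (E' i) (E' j) : Fin n → Fin n → ℝ)) := by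
      apply measurable_pi_lambda
      intro i
      apply measurable_pi_lambda
      intro j
      have hcont : Continuous fun T : En n →L[ℝ] (En n →L[ℝ] ℝ) => T (E' i) (E' j) :=
        (ContinuousLinearMap.apply ℝ ℝ (E' j)).continuous.comp
          (ContinuousLinearMap.apply ℝ (En n →L[ℝ] ℝ) (E' i)).continuous
      exact hcont.measurable.comp (measurable_fderiv ℝ (fderiv ℝ ξ))
    have h2 : Continuous fun A : Fin n → Fin n → ℝ =>
        |(Matrix.of A).det ^ ((1:ℝ)/n) - 1| ^ (n:ℕ) := by
      apply Continuous.pow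
      apply Continuous.abs
      apply Continuous.sub _ continuous_const
      exact (Real.continuous_rpow_const (by positivity)).comp continuous_det_pi
    exact h2.measurable.comp h1
  have hkkm : ∀ y ∈ O, k y = km y := by
    intro y hy
    have hg : g y = (bmat (fderiv ℝ (fderiv ℝ ξ) y)).det := by
      rw [← hdetξ y hy, Hess_eq_bmat]
    simp only [hkdef, hkmdef, hg]
  have hae : k =ᵐ[volume.restrict O] km := by
    rw [Filter.EventuallyEq, ae_restrict_iff' hO.measurableSet]
    exact ae_of_all _ hkkm
  have hkbound : ∀ y ∈ O, k y ≤ c₀ ^ n := by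
    intro y hy
    obtain ⟨hg1, hg2⟩ := hgb y hy
    have hgpos : 0 < g y := lt_of_lt_of_le (by positivity) hg1
    have h1 : g y ^ ((1:ℝ)/n) ≤ c₀ := by
      calc g y ^ ((1:ℝ)/n) ≤ c₀ ^ ((1:ℝ)/n) :=
            Real.rpow_le_rpow hgpos.le hg2 (by positivity)
        _ ≤ c₀ ^ (1:ℝ) := by
            apply Real.rpow_le_rpow_of_exponent_le hc₀
            rw [div_le_one (by exact_mod_cast Nat.pos_of_ne_zero hn0)]
            exact_mod_cast Nat.one_le_iff_ne_zero.2 hn0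
        _ = c₀ := Real.rpow_one c₀
    have h2 : (0:ℝ) ≤ g y ^ ((1:ℝ)/n) := Real.rpow_nonneg hgpos.le _
    have habs : |g y ^ ((1:ℝ)/n) - 1| ≤ c₀ := abs_le.2 ⟨by linarith, by linarith⟩
    calc k y = |g y ^ ((1:ℝ)/n) - 1| ^ (n:ℕ) := rfl
      _ ≤ c₀ ^ (n:ℕ) := pow_le_pow_left₀ (abs_nonneg _) habs n
  have hIfin : I ≠ ⊤ := by
    have hle : I ≤ ENNReal.ofReal (c₀ ^ n) * volume O := by
      rw [hIdef, ← setLIntegral_const O _]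
      apply lintegral_mono_ae
      rw [ae_restrict_iff' hO.measurableSet]
      exact ae_of_all _ fun y hy => ENNReal.ofReal_le_ofReal (hkbound y hy)
    exact ne_top_of_le_ne_top
      (ENNReal.mul_ne_top ENNReal.ofReal_ne_top hOb.measure_lt_top.ne) hle
  have hint : ∫ y in O, k y = I.toReal := by
    have h1 : ∫ y in O, k y = ∫ y in O, km y := integral_congr_ae hae
    have h2 : ∫ y in O, km y = (∫⁻ y in O, ENNReal.ofReal (km y)).toReal :=
      integral_eq_lintegral_of_nonneg_ae (ae_of_all _ fun y => by positivity)
        hkm_meas.aestronglyMeasurable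
    have h3 : (∫⁻ y in O, ENNReal.ofReal (km y)) = I := by
      rw [hIdef]
      apply lintegral_congr_ae
      exact (hae.fun_comp ENNReal.ofReal).symm
    rw [h1, h2, h3]
  have hInn : (0:ℝ) ≤ ∫ y in O, k y := integral_nonneg fun y => by positivity
  have main : ∀ v : En n → ℝ, ContDiffOn ℝ 2 v O → ContinuousOn v (closure O) →
      (∀ z ∈ frontier O, v z = 0) →
      (∀ y ∈ O, (bmat (fderiv ℝ (fderiv ℝ v) y)).PosSemidef →
        (bmat (fderiv ℝ (fderiv ℝ v) y)).det ≤ k y) →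
      v x < 0 → -v x ≤ r * ω⁻¹ ^ ((1:ℝ)/n) * (∫ y in O, k y) ^ ((1:ℝ)/n) := by
    intro v hv1 hv2 hv3 hv4 hv5
    have habp := abp (by omega) hr hO hOb hdiam hv1 hv2 hv3 k hv4 hx hv5
    set M := -v x with hMdef
    have hMpos : 0 < M := by rw [hMdef]; linarith
    have hleft : ((M/r)^n) * ω ≤ I.toReal := by
      have h1 := ENNReal.toReal_mono hIfin habp
      rwa [ENNReal.toReal_mul, ENNReal.toReal_ofReal (by positivity)] at h1
    have hMr : M / r ≤ (I.toReal / ω) ^ ((1:ℝ)/n) := by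
      have h2 : (M/r)^n ≤ I.toReal / ω := (le_div_iff₀ hωpos).2 hleft
      calc M / r = ((M/r)^n) ^ ((n:ℝ)⁻¹) :=
            (Real.pow_rpow_inv_natCast (by positivity) hn0).symm
        _ ≤ (I.toReal / ω) ^ ((n:ℝ)⁻¹) :=
            Real.rpow_le_rpow (by positivity) h2 (by positivity)
        _ = (I.toReal / ω) ^ ((1:ℝ)/n) := by rw [one_div]
    have hITnn : (0:ℝ) ≤ I.toReal := ENNReal.toReal_nonneg
    calc M = r * (M / r) := by field_simp
      _ ≤ r * (I.toReal / ω) ^ ((1:ℝ)/n) := mul_le_mul_of_nonneg_left hMr hr.le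
      _ = r * ω⁻¹ ^ ((1:ℝ)/n) * (∫ y in O, k y) ^ ((1:ℝ)/n) := by
          rw [hint, div_eq_mul_inv, Real.mul_rpow hITnn (by positivity)]
          ring
  rcases lt_trichotomy (ξ x - ξb x) 0 with hlt | heq | hgt
  · have hdetb : ∀ y ∈ O, (bmat (fderiv ℝ (fderiv ℝ (ξ - ξb)) y)).PosSemidef →
        (bmat (fderiv ℝ (fderiv ℝ (ξ - ξb)) y)).det ≤ k y := by
      intro y hy hpsd
      have hCc : bmat (fderiv ℝ (fderiv ℝ (ξ - ξb)) y) =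
          bmat (fderiv ℝ (fderiv ℝ ξ) y) - bmat (fderiv ℝ (fderiv ℝ ξb) y) :=
        hess_sub_eq hO hξC2 hξbC2 hy
      set Cc := bmat (fderiv ℝ (fderiv ℝ (ξ - ξb)) y)
      have hBpsd := hess_psd_of_convex hO hξbconv hξbC2 hy
      have hBdet : (bmat (fderiv ℝ (fderiv ℝ ξb) y)).det = 1 := by
        rw [← Hess_eq_bmat]; exact hdetξb y hy
      have hAdet : (bmat (fderiv ℝ (fderiv ℝ ξ) y)).det = g y := by
        rw [← Hess_eq_bmat]; exact hdetξ y hy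
      have hsum : bmat (fderiv ℝ (fderiv ℝ ξb) y) + Cc = bmat (fderiv ℝ (fderiv ℝ ξ) y) := by
        rw [hCc]; abel
      have hmink := minkowski_det hn0 hBpsd (by rw [hBdet]; norm_num) hpsd
      rw [hsum, hAdet, hBdet, Real.one_rpow] at hmink
      have hCnn := psd_det_nonneg hpsd
      have hCrnn : (0:ℝ) ≤ Cc.det ^ ((1:ℝ)/n) := Real.rpow_nonneg hCnn _
      have h1 : Cc.det ^ ((1:ℝ)/n) ≤ |g y ^ ((1:ℝ)/n) - 1| := by
        rw [abs_of_nonneg (by linarith)]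
        linarith
      calc Cc.det = (Cc.det ^ ((1:ℝ)/n)) ^ (n:ℕ) := by
            rw [one_div, Real.rpow_inv_natCast_pow hCnn hn0]
        _ ≤ |g y ^ ((1:ℝ)/n) - 1| ^ (n:ℕ) := pow_le_pow_left₀ hCrnn h1 n
        _ = k y := rfl
    have hbound := main (ξ - ξb) (hξC2.sub hξbC2) (hξcont.sub hξbcont)
      (fun z hz => by simp [hbd z hz]) hdetb (by simpa using hlt)
    rw [abs_of_neg hlt]
    simpa using hbound
  · rw [heq, abs_zero]
    have h1 : (0:ℝ) ≤ (∫ y in O, k y) ^ ((1:ℝ)/n) := Real.rpow_nonneg hInn _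
    positivity
  · have hdetb : ∀ y ∈ O, (bmat (fderiv ℝ (fderiv ℝ (ξb - ξ)) y)).PosSemidef →
        (bmat (fderiv ℝ (fderiv ℝ (ξb - ξ)) y)).det ≤ k y := by
      intro y hy hpsd
      have hCc : bmat (fderiv ℝ (fderiv ℝ (ξb - ξ)) y) =
          bmat (fderiv ℝ (fderiv ℝ ξb) y) - bmat (fderiv ℝ (fderiv ℝ ξ) y) :=
        hess_sub_eq hO hξbC2 hξC2 hy
      set Cc := bmat (fderiv ℝ (fderiv ℝ (ξb - ξ)) y)
      have hBpsd := hess_psd_of_convex hO hξconv hξC2 hy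
      have hBdet : (bmat (fderiv ℝ (fderiv ℝ ξb) y)).det = 1 := by
        rw [← Hess_eq_bmat]; exact hdetξb y hy
      have hAdet : (bmat (fderiv ℝ (fderiv ℝ ξ) y)).det = g y := by
        rw [← Hess_eq_bmat]; exact hdetξ y hy
      obtain ⟨hg1, hg2⟩ := hgb y hy
      have hgpos : 0 < g y := lt_of_lt_of_le (by positivity) hg1
      have hsum : bmat (fderiv ℝ (fderiv ℝ ξ) y) + Cc = bmat (fderiv ℝ (fderiv ℝ ξb) y) := by
        rw [hCc]; abel
      have hmink := minkowski_det hn0 hBpsd (by rw [hAdet]; exact hgpos) hpsd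
      rw [hsum, hAdet, hBdet, Real.one_rpow] at hmink
      have hCnn := psd_det_nonneg hpsd
      have hCrnn : (0:ℝ) ≤ Cc.det ^ ((1:ℝ)/n) := Real.rpow_nonneg hCnn _
      have h1 : Cc.det ^ ((1:ℝ)/n) ≤ |g y ^ ((1:ℝ)/n) - 1| := by
        have := neg_abs_le (g y ^ ((1:ℝ)/n) - 1)
        linarith
      calc Cc.det = (Cc.det ^ ((1:ℝ)/n)) ^ (n:ℕ) := by
            rw [one_div, Real.rpow_inv_natCast_pow hCnn hn0]
        _ ≤ |g y ^ ((1:ℝ)/n) - 1| ^ (n:ℕ) := pow_le_pow_left₀ hCrnn h1 n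
        _ = k y := rfl
    have hbound := main (ξb - ξ) (hξbC2.sub hξC2) (hξbcont.sub hξcont)
      (fun z hz => by simp [hbd z hz]) hdetb (by simpa using hgt)
    rw [abs_of_pos hgt]
    have : -((ξb - ξ) x) = ξ x - ξb x := by simp
    rw [← this]
    simpa using hbound
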